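/- The isentropic vortex satisfies the steady momentum equations: with the fields ρ, u, v, p defined below, at every point (x,y) ∈ ℝ² one has ∂_x(ρu² + p) + ∂_y(ρuv) = 0 and ∂_x(ρuv) + ∂_y(ρv² + p) = 0. -/

import Mathlib

open Real

/-- Squared distance from the vortex center `(5,5)`. -/
noncomputable def vortexR2 (x y : ℝ) : ℝ := (x - 5)^2 + (y - 5)^2

/-- Temperature perturbation `δT` of the isentropic (Hu–Shu) vortex. -/
noncomputable def vortexDT (γ ε x y : ℝ) : ℝ :=
  -((γ - 1) * ε^2 / (8 * γ * π^2)) * exp (1 - vortexR2 x y)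

/-- Density `ρ = (1+δT)^{1/(γ−1)}` of the isentropic vortex. -/
noncomputable def vortexRho (γ ε x y : ℝ) : ℝ :=
  (1 + vortexDT γ ε x y) ^ (1 / (γ - 1))

/-- Pressure `p = (1+δT)^{γ/(γ−1)}` of the isentropic vortex. -/
noncomputable def vortexP (γ ε x y : ℝ) : ℝ :=
  (1 + vortexDT γ ε x y) ^ (γ / (γ - 1))

/-- `x`-velocity `u` of the isentropic vortex. -/
noncomputable def vortexU (ε x y : ℝ) : ℝ :=
  -(ε / (2 * π)) * exp ((1 - vortexR2 x y) / 2) * (y - 5)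

/-- `y`-velocity `v` of the isentropic vortex. -/
noncomputable def vortexV (ε x y : ℝ) : ℝ :=
  (ε / (2 * π)) * exp ((1 - vortexR2 x y) / 2) * (x - 5)

lemma vortex_base_pos (γ ε : ℝ) (hγ : 1 < γ)
    (hε : (γ - 1) * ε^2 * exp 1 < 8 * γ * π^2) (x y : ℝ) :
    0 < 1 + vortexDT γ ε x y := by
  have hπ : (0:ℝ) < π := pi_pos
  have hγ0 : (0:ℝ) < γ := by linarith
  have hden : (0:ℝ) < 8 * γ * π^2 := by positivity
  have hk : 0 ≤ (γ - 1) * ε^2 / (8 * γ * π^2) := by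
    apply div_nonneg _ hden.le
    have : (0:ℝ) ≤ γ - 1 := by linarith
    positivity
  have hE : exp (1 - vortexR2 x y) ≤ exp 1 := by
    apply exp_le_exp.mpr
    unfold vortexR2
    nlinarith [sq_nonneg (x-5), sq_nonneg (y-5)]
  have h1 : (γ - 1) * ε^2 / (8 * γ * π^2) * exp 1 < 1 := by
    rw [div_mul_eq_mul_div, div_lt_one hden]
    linarith
  have h2 : (γ - 1) * ε^2 / (8 * γ * π^2) * exp (1 - vortexR2 x y)
      ≤ (γ - 1) * ε^2 / (8 * γ * π^2) * exp 1 := mul_le_mul_of_nonneg_left hE hk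
  unfold vortexDT
  nlinarith

lemma vortex_momentum_x (γ ε : ℝ) (hγ : 1 < γ)
    (hε : (γ - 1) * ε^2 * exp 1 < 8 * γ * π^2) (x y : ℝ) :
    deriv (fun x' => vortexRho γ ε x' y * (vortexU ε x' y)^2 + vortexP γ ε x' y) x
      + deriv (fun y' => vortexRho γ ε x y' * vortexU ε x y' * vortexV ε x y') y = 0 := by
  have hπ : (π:ℝ) ≠ 0 := pi_ne_zero
  have hγ1 : γ - 1 ≠ 0 := sub_ne_zero.mpr (by linarith)
  have hγ0 : γ ≠ 0 := by intro h; linarith [h ▸ hγ]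
  have hApos : 0 < 1 + vortexDT γ ε x y := vortex_base_pos γ ε hγ hε x y
  -- x-direction building blocks
  have hr : HasDerivAt (fun x' : ℝ => vortexR2 x' y) (2*(x-5)) x := by
    have h : HasDerivAt (fun x' : ℝ => (x'-5)^2 + (y-5)^2) (2*(x-5)) x := by
      simpa using (((hasDerivAt_id x).sub_const 5).pow 2).add_const ((y-5)^2)
    exact h
  have h1r : HasDerivAt (fun x' : ℝ => 1 - vortexR2 x' y) (-(2*(x-5))) x := hr.const_sub 1
  have hEx : HasDerivAt (fun x' : ℝ => exp (1 - vortexR2 x' y))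
      (exp (1 - vortexR2 x y) * -(2*(x-5))) x := h1r.exp
  have hAx : HasDerivAt (fun x' : ℝ => 1 + vortexDT γ ε x' y)
      (-((γ-1)*ε^2/(8*γ*π^2)) * (exp (1 - vortexR2 x y) * -(2*(x-5)))) x := by
    have h : HasDerivAt (fun x' : ℝ => 1 + -((γ-1)*ε^2/(8*γ*π^2)) * exp (1 - vortexR2 x' y))
        (-((γ-1)*ε^2/(8*γ*π^2)) * (exp (1 - vortexR2 x y) * -(2*(x-5)))) x :=
      (hEx.const_mul _).const_add 1
    exact h
  have hRx : HasDerivAt (fun x' : ℝ => vortexRho γ ε x' y)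
      ((-((γ-1)*ε^2/(8*γ*π^2)) * (exp (1 - vortexR2 x y) * -(2*(x-5)))) * (1/(γ-1))
        * (1 + vortexDT γ ε x y) ^ (1/(γ-1) - 1)) x := by
    simp only [vortexRho]
    exact hAx.rpow_const (Or.inl hApos.ne')
  have hPx : HasDerivAt (fun x' : ℝ => vortexP γ ε x' y)
      ((-((γ-1)*ε^2/(8*γ*π^2)) * (exp (1 - vortexR2 x y) * -(2*(x-5)))) * (γ/(γ-1))
        * (1 + vortexDT γ ε x y) ^ (γ/(γ-1) - 1)) x := by
    simp only [vortexP]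
    exact hAx.rpow_const (Or.inl hApos.ne')
  have hFx : HasDerivAt (fun x' : ℝ => exp ((1 - vortexR2 x' y)/2))
      (exp ((1 - vortexR2 x y)/2) * (-(2*(x-5))/2)) x := (h1r.div_const 2).exp
  have hUx : HasDerivAt (fun x' : ℝ => vortexU ε x' y)
      ((-(ε/(2*π)) * (exp ((1 - vortexR2 x y)/2) * (-(2*(x-5))/2))) * (y-5)) x := by
    simp only [vortexU]
    exact (hFx.const_mul _).mul_const _
  -- y-direction building blocks
  have hry : HasDerivAt (fun y' : ℝ => vortexR2 x y') (2*(y-5)) y := by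
    have h : HasDerivAt (fun y' : ℝ => (x-5)^2 + (y'-5)^2) (2*(y-5)) y := by
      simpa using (((hasDerivAt_id y).sub_const 5).pow 2).const_add ((x-5)^2)
    exact h
  have h1ry : HasDerivAt (fun y' : ℝ => 1 - vortexR2 x y') (-(2*(y-5))) y := hry.const_sub 1
  have hEy : HasDerivAt (fun y' : ℝ => exp (1 - vortexR2 x y'))
      (exp (1 - vortexR2 x y) * -(2*(y-5))) y := h1ry.exp
  have hAy : HasDerivAt (fun y' : ℝ => 1 + vortexDT γ ε x y')
      (-((γ-1)*ε^2/(8*γ*π^2)) * (exp (1 - vortexR2 x y) * -(2*(y-5)))) y := by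
    have h : HasDerivAt (fun y' : ℝ => 1 + -((γ-1)*ε^2/(8*γ*π^2)) * exp (1 - vortexR2 x y'))
        (-((γ-1)*ε^2/(8*γ*π^2)) * (exp (1 - vortexR2 x y) * -(2*(y-5)))) y :=
      (hEy.const_mul _).const_add 1
    exact h
  have hRy : HasDerivAt (fun y' : ℝ => vortexRho γ ε x y')
      ((-((γ-1)*ε^2/(8*γ*π^2)) * (exp (1 - vortexR2 x y) * -(2*(y-5)))) * (1/(γ-1))
        * (1 + vortexDT γ ε x y) ^ (1/(γ-1) - 1)) y := by
    simp only [vortexRho]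
    exact hAy.rpow_const (Or.inl hApos.ne')
  have hFy : HasDerivAt (fun y' : ℝ => exp ((1 - vortexR2 x y')/2))
      (exp ((1 - vortexR2 x y)/2) * (-(2*(y-5))/2)) y := (h1ry.div_const 2).exp
  have hUy : HasDerivAt (fun y' : ℝ => vortexU ε x y')
      ((-(ε/(2*π)) * (exp ((1 - vortexR2 x y)/2) * (-(2*(y-5))/2))) * (y-5)
        + (-(ε/(2*π)) * exp ((1 - vortexR2 x y)/2)) * 1) y := by
    simp only [vortexU]
    exact (hFy.const_mul _).mul ((hasDerivAt_id y).sub_const 5)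
  have hVy : HasDerivAt (fun y' : ℝ => vortexV ε x y')
      (((ε/(2*π)) * (exp ((1 - vortexR2 x y)/2) * (-(2*(y-5))/2))) * (x-5)) y := by
    simp only [vortexV]
    exact ((hFy.const_mul _).mul_const _)
  -- the two derivatives
  have d1 : deriv (fun x' => vortexRho γ ε x' y * (vortexU ε x' y)^2 + vortexP γ ε x' y) x
      = (γ-1)*ε^2/(8*γ*π^2) * (2*(x-5)) * exp (1 - vortexR2 x y) * (1/(γ-1))
          * (1 + vortexDT γ ε x y) ^ (1/(γ-1) - 1)
          * (ε/(2*π))^2 * exp ((1 - vortexR2 x y)/2)^2 * (y-5)^2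
        - (1 + vortexDT γ ε x y) ^ ((1:ℝ)/(γ-1)) * 2 * (ε/(2*π))^2
          * exp ((1 - vortexR2 x y)/2)^2 * (x-5) * (y-5)^2
        + (γ-1)*ε^2/(8*γ*π^2) * (2*(x-5)) * exp (1 - vortexR2 x y) * (γ/(γ-1))
          * (1 + vortexDT γ ε x y) ^ (γ/(γ-1) - 1) := by
    refine Eq.trans (((hRx.mul (hUx.pow 2)).add hPx).deriv) ?_
    simp only [vortexU, vortexRho, Pi.pow_apply]
    push_cast
    ring
  have d2 : deriv (fun y' => vortexRho γ ε x y' * vortexU ε x y' * vortexV ε x y') y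
      = -((γ-1)*ε^2/(8*γ*π^2) * (2*(y-5)) * exp (1 - vortexR2 x y) * (1/(γ-1))
          * (1 + vortexDT γ ε x y) ^ (1/(γ-1) - 1)
          * (ε/(2*π))^2 * exp ((1 - vortexR2 x y)/2)^2 * (y-5) * (x-5))
        + (1 + vortexDT γ ε x y) ^ ((1:ℝ)/(γ-1)) * (ε/(2*π))^2
          * exp ((1 - vortexR2 x y)/2)^2 * (x-5) * ((y-5)^2 - 1)
        + (1 + vortexDT γ ε x y) ^ ((1:ℝ)/(γ-1)) * (ε/(2*π))^2
          * exp ((1 - vortexR2 x y)/2)^2 * (y-5)^2 * (x-5) := by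
    refine Eq.trans (((hRy.mul hUy).mul hVy).deriv) ?_
    simp only [vortexU, vortexV, vortexRho, Pi.mul_apply]
    ring
  rw [d1, d2]
  have hFE : exp ((1 - vortexR2 x y)/2) ^ 2 = exp (1 - vortexR2 x y) := by
    rw [sq, ← Real.exp_add]
    congr 1
    ring
  have hQQ : γ/(γ-1) - 1 = 1/(γ-1) := by field_simp; ring
  have hRm : (1 + vortexDT γ ε x y) ^ ((1:ℝ)/(γ-1))
      = (1 + vortexDT γ ε x y) ^ ((1:ℝ)/(γ-1) - 1) * (1 + vortexDT γ ε x y) := by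
    have h := Real.rpow_add_one hApos.ne' (1/(γ-1) - 1)
    rw [sub_add_cancel] at h
    exact h
  rw [hFE, hQQ, hRm]
  field_simp
  ring

/-- The isentropic vortex satisfies the steady momentum equations
`∂_x(ρu² + p) + ∂_y(ρuv) = 0` and `∂_x(ρuv) + ∂_y(ρv² + p) = 0` at every point. -/
theorem isentropic_vortex_momentum (γ ε : ℝ) (hγ : 1 < γ)
    (hε : (γ - 1) * ε^2 * exp 1 < 8 * γ * π^2) (x y : ℝ) :
    (deriv (fun x' => vortexRho γ ε x' y * (vortexU ε x' y)^2 + vortexP γ ε x' y) x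
      + deriv (fun y' => vortexRho γ ε x y' * vortexU ε x y' * vortexV ε x y') y = 0)
    ∧
    (deriv (fun x' => vortexRho γ ε x' y * vortexU ε x' y * vortexV ε x' y) x
      + deriv (fun y' => vortexRho γ ε x y' * (vortexV ε x y')^2 + vortexP γ ε x y') y = 0) := by
  constructor
  · exact vortex_momentum_x γ ε hγ hε x y
  · have h := vortex_momentum_x γ ε hγ hε y x
    have e1 : (fun x' => vortexRho γ ε x' x * (vortexU ε x' x)^2 + vortexP γ ε x' x)
        = (fun y' => vortexRho γ ε x y' * (vortexV ε x y')^2 + vortexP γ ε x y') := by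
      funext z
      have hsym : vortexR2 z x = vortexR2 x z := by unfold vortexR2; ring
      simp only [vortexRho, vortexP, vortexU, vortexV, vortexDT, hsym]
      ring
    have e2 : (fun y' => vortexRho γ ε y y' * vortexU ε y y' * vortexV ε y y')
        = (fun x' => vortexRho γ ε x' y * vortexU ε x' y * vortexV ε x' y) := by
      funext z
      have hsym : vortexR2 y z = vortexR2 z y := by unfold vortexR2; ring
      simp only [vortexRho, vortexU, vortexV, vortexDT, hsym]
      ring
    rw [e1, e2] at h
    linarith
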